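/- The majorizing function bounds stress: for any n×d matrices X and Y with the rows of Y pairwise distinct, f^Y(X) := ∑_{i<j} D_{ij}² + tr(XᵀLX) − 2·∑_{i<j} D_{ij}⟨X_i − X_j, Y_i − Y_j⟩/‖Y_i − Y_j‖ satisfies f^Y(X) ≥ stress(X) := ∑_{i<j} (‖X_i − X_j‖ − D_{ij})², with equality when X = Y. -/
import Mathlib


open Finset

/-- The complete-graph Laplacian. -/
def completeLaplacian (n : ℕ) : Matrix (Fin n) (Fin n) ℝ :=
  fun i j => if i = j then (n : ℝ) - 1 else -1

/-- Euclidean norm of the difference of rows `i` and `j` of a matrix. -/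
noncomputable def rowDist {n d : ℕ} (X : Matrix (Fin n) (Fin d) ℝ) (i j : Fin n) : ℝ :=
  Real.sqrt (∑ k : Fin d, (X i k - X j k) ^ 2)

/-- Inner product of the row differences of `X` and `Y`. -/
def rowInner {n d : ℕ} (X Y : Matrix (Fin n) (Fin d) ℝ) (i j : Fin n) : ℝ :=
  ∑ k : Fin d, (X i k - X j k) * (Y i k - Y j k)

/-- The stress function. -/
noncomputable def stress {n d : ℕ} (D : Matrix (Fin n) (Fin n) ℝ)
    (X : Matrix (Fin n) (Fin d) ℝ) : ℝ :=
  ∑ i : Fin n, ∑ j : Fin n, if i < j then (rowDist X i j - D i j) ^ 2 else 0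

/-- The majorizing function `f^Y(X)`. -/
noncomputable def majorizer {n d : ℕ} (D : Matrix (Fin n) (Fin n) ℝ)
    (Y X : Matrix (Fin n) (Fin d) ℝ) : ℝ :=
  (∑ i : Fin n, ∑ j : Fin n, if i < j then (D i j) ^ 2 else 0)
    + Matrix.trace (X.transpose * completeLaplacian n * X)
    - 2 * ∑ i : Fin n, ∑ j : Fin n,
        if i < j then D i j * rowInner X Y i j / rowDist Y i j else 0

/-- the majorizing function bounds stress, with equality when `X = Y`. -/
theorem majorizer_ge_stress (n d : ℕ) (D : Matrix (Fin n) (Fin n) ℝ)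
    (hDsymm : D.IsSymm) (hDnonneg : ∀ i j, 0 ≤ D i j) (hDdiag : ∀ i, D i i = 0)
    (X Y : Matrix (Fin n) (Fin d) ℝ)
    (hY : ∀ i j, i ≠ j → Y i ≠ Y j) :
    majorizer D Y X ≥ stress D X ∧ (X = Y → majorizer D Y X = stress D X) := by
  -- distances between distinct rows of Y are positive
  have hYpos : ∀ i j : Fin n, i ≠ j → 0 < rowDist Y i j := by
    intro i j hij
    have hne : Y i ≠ Y j := hY i j hij
    have : 0 < ∑ k : Fin d, (Y i k - Y j k) ^ 2 := by
      obtain ⟨k, hk⟩ : ∃ k, Y i k ≠ Y j k := by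
        by_contra h
        push_neg at h
        exact hne (funext h)
      have hk' : Y i k - Y j k ≠ 0 := sub_ne_zero.mpr hk
      have : (Y i k - Y j k) ^ 2 > 0 := by positivity
      exact Finset.sum_pos' (fun _ _ => sq_nonneg _) ⟨k, Finset.mem_univ k, this⟩
    exact Real.sqrt_pos.mpr this
  have hdist_sq : ∀ (Z : Matrix (Fin n) (Fin d) ℝ) (i j : Fin n),
      (rowDist Z i j) ^ 2 = ∑ k : Fin d, (Z i k - Z j k) ^ 2 := by
    intro Z i j
    exact Real.sq_sqrt (Finset.sum_nonneg fun _ _ => sq_nonneg _)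
  -- Cauchy-Schwarz: rowInner X Y ≤ rowDist X * rowDist Y
  have hCS : ∀ i j : Fin n, rowInner X Y i j ≤ rowDist X i j * rowDist Y i j := by
    intro i j
    have h := Finset.sum_mul_sq_le_sq_mul_sq Finset.univ
      (fun k => X i k - X j k) (fun k => Y i k - Y j k)
    have h1 : (rowInner X Y i j) ^ 2 ≤ (rowDist X i j * rowDist Y i j) ^ 2 := by
      rw [mul_pow, hdist_sq X, hdist_sq Y]
      exact h
    have h2 : 0 ≤ rowDist X i j * rowDist Y i j :=
      mul_nonneg (Real.sqrt_nonneg _) (Real.sqrt_nonneg _)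
    exact (abs_le_of_sq_le_sq' h1 h2).2
  -- trace identity
  have htrace : Matrix.trace (X.transpose * completeLaplacian n * X)
      = ∑ i : Fin n, ∑ j : Fin n, if i < j then (rowDist X i j) ^ 2 else 0 := by
    have key : ∀ a : Fin n → ℝ,
        ((n : ℝ) * ∑ i, (a i) ^ 2) - (∑ i, a i) ^ 2
          = ∑ i : Fin n, ∑ j : Fin n, if i < j then (a i - a j) ^ 2 else 0 := by
      intro a
      have hdouble : ∑ i : Fin n, ∑ j : Fin n, (a i - a j) ^ 2
          = 2 * ∑ i : Fin n, ∑ j : Fin n, if i < j then (a i - a j) ^ 2 else 0 := by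
        have split : ∀ i j : Fin n, (a i - a j) ^ 2
            = (if i < j then (a i - a j) ^ 2 else 0)
              + (if j < i then (a i - a j) ^ 2 else 0) := by
          intro i j
          rcases lt_trichotomy i j with h | h | h
          · simp [h, not_lt_of_gt h]
          · simp [h]
          · simp [h, not_lt_of_gt h]
        have step1 : ∑ i : Fin n, ∑ j : Fin n, (a i - a j) ^ 2
            = (∑ i : Fin n, ∑ j : Fin n, if i < j then (a i - a j) ^ 2 else 0)
              + ∑ i : Fin n, ∑ j : Fin n, if j < i then (a i - a j) ^ 2 else 0 := by
          rw [← Finset.sum_add_distrib]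
          refine Finset.sum_congr rfl fun i _ => ?_
          rw [← Finset.sum_add_distrib]
          exact Finset.sum_congr rfl fun j _ => split i j
        have step2 : (∑ i : Fin n, ∑ j : Fin n, if j < i then (a i - a j) ^ 2 else 0)
            = ∑ i : Fin n, ∑ j : Fin n, if i < j then (a i - a j) ^ 2 else 0 := by
          rw [Finset.sum_comm]
          refine Finset.sum_congr rfl fun i _ => Finset.sum_congr rfl fun j _ => ?_
          have : (a j - a i) ^ 2 = (a i - a j) ^ 2 := by ring
          by_cases h : i < j <;> simp [h, this]
        rw [step1, step2, two_mul]
      have expand : ∑ i : Fin n, ∑ j : Fin n, (a i - a j) ^ 2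
          = 2 * ((n : ℝ) * ∑ i, (a i) ^ 2) - 2 * (∑ i, a i) ^ 2 := by
        have h1 : ∀ i j : Fin n, (a i - a j) ^ 2
            = (a i)^2 + (a j)^2 - 2 * (a i * a j) := by intros; ring
        simp_rw [h1]
        simp only [Finset.sum_sub_distrib, Finset.sum_add_distrib,
          Finset.sum_const, Finset.card_univ, Fintype.card_fin,
          nsmul_eq_mul, ← Finset.mul_sum, ← Finset.sum_mul]
        ring
      rw [expand] at hdouble
      linarith
    -- compute the trace
    have htr : Matrix.trace (X.transpose * completeLaplacian n * X)
        = ∑ k : Fin d, (((n : ℝ) * ∑ i, (X i k) ^ 2) - (∑ i, X i k) ^ 2) := by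
      rw [Matrix.trace]
      simp only [Matrix.diag_apply, Matrix.mul_apply, Matrix.transpose_apply]
      refine Finset.sum_congr rfl fun k _ => ?_
      have hcol : ∀ j : Fin n, (∑ i : Fin n, X i k * completeLaplacian n i j)
          = (n : ℝ) * X j k - ∑ i : Fin n, X i k := by
        intro j
        simp only [completeLaplacian]
        have h2 : ∀ i : Fin n, X i k * (if i = j then (n : ℝ) - 1 else -1)
            = (if i = j then (n : ℝ) * X j k else 0) - X i k := by
          intro i
          by_cases h : i = j
          · subst h; simp; ring
          · simp [h]
        simp_rw [h2, Finset.sum_sub_distrib, Finset.sum_ite_eq' Finset.univ j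
          (fun _ => (n : ℝ) * X j k), Finset.mem_univ, if_true]
      rw [show (∑ j : Fin n, (∑ i : Fin n, X i k * completeLaplacian n i j) * X j k)
          = ∑ j : Fin n, ((n : ℝ) * (X j k * X j k)
              - (∑ i : Fin n, X i k) * X j k) from
        Finset.sum_congr rfl fun j _ => by rw [hcol j]; ring]
      rw [Finset.sum_sub_distrib, ← Finset.mul_sum, ← Finset.mul_sum]
      simp_rw [← sq]
    rw [htr]
    have : ∀ k : Fin d, (((n : ℝ) * ∑ i, (X i k) ^ 2) - (∑ i, X i k) ^ 2)
        = ∑ i : Fin n, ∑ j : Fin n, if i < j then (X i k - X j k) ^ 2 else 0 :=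
      fun k => key (fun i => X i k)
    simp_rw [this]
    rw [Finset.sum_comm]
    refine Finset.sum_congr rfl fun i _ => ?_
    rw [Finset.sum_comm]
    refine Finset.sum_congr rfl fun j _ => ?_
    by_cases h : i < j
    · simp [h, hdist_sq X i j]
    · simp [h]
  -- rewrite majorizer as a single double sum
  have hmaj : majorizer D Y X = ∑ i : Fin n, ∑ j : Fin n,
      if i < j then (D i j) ^ 2 + (rowDist X i j) ^ 2
        - 2 * (D i j * rowInner X Y i j / rowDist Y i j) else 0 := by
    rw [majorizer, htrace]
    rw [Finset.mul_sum]
    simp_rw [Finset.mul_sum]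
    rw [← Finset.sum_add_distrib, ← Finset.sum_sub_distrib]
    refine Finset.sum_congr rfl fun i _ => ?_
    rw [← Finset.sum_add_distrib, ← Finset.sum_sub_distrib]
    refine Finset.sum_congr rfl fun j _ => ?_
    by_cases h : i < j <;> simp [h]
  constructor
  · -- inequality
    rw [hmaj, stress, ge_iff_le]
    refine Finset.sum_le_sum fun i _ => Finset.sum_le_sum fun j _ => ?_
    by_cases h : i < j
    · simp only [h, if_true]
      have ht : 0 < rowDist Y i j := hYpos i j (ne_of_lt h)
      have hD : 0 ≤ D i j := hDnonneg i j
      have hle : rowInner X Y i j / rowDist Y i j ≤ rowDist X i j :=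
        (div_le_iff₀ ht).mpr (hCS i j)
      have key : D i j * (rowInner X Y i j / rowDist Y i j)
          ≤ D i j * rowDist X i j := mul_le_mul_of_nonneg_left hle hD
      have : D i j * rowInner X Y i j / rowDist Y i j ≤ D i j * rowDist X i j := by
        rw [mul_div_assoc]; exact key
      nlinarith [this]
    · simp [h]
  · -- equality when X = Y
    intro hXY
    subst hXY
    rw [hmaj, stress]
    refine Finset.sum_congr rfl fun i _ => Finset.sum_congr rfl fun j _ => ?_
    by_cases h : i < j
    · simp only [h, if_true]
      have ht : 0 < rowDist X i j := hYpos i j (ne_of_lt h)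
      have hinner : rowInner X X i j = (rowDist X i j) ^ 2 := by
        rw [hdist_sq X i j, rowInner]
        refine Finset.sum_congr rfl fun k _ => ?_
        ring
      rw [hinner]
      have hne : rowDist X i j ≠ 0 := ne_of_gt ht
      field_simp
      ring
    · simp [h]
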